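/- For every p ≥ 1 and λ > 0, every minimizer Ω of E_{p,λ} in the class A satisfies the stationarity identity ∫_Ω dist(x, ∂Ω)^p dx = (λ/(p+2)) · H¹(∂Ω)/H²(Ω). -/

import Mathlib

open MeasureTheory Metric Set Filter
open scoped Topology ENNReal NNReal Pointwise

/-- The plane `ℝ²`. -/
abbrev Plane := EuclideanSpace ℝ (Fin 2)

/-- The average-distance term `∫_Ω dist(x, ∂Ω)^p dx`. -/
noncomputable def distInt (p : ℝ) (Ω : Set Plane) : ℝ :=
  ∫ x in Ω, infDist x (frontier Ω) ^ p ∂μH[2]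

/-- The perimeter `H¹(∂Ω)`. -/
noncomputable def perim (Ω : Set Plane) : ℝ :=
  (μH[1] (frontier Ω)).toReal

/-- The area `H²(Ω)`. -/
noncomputable def area (Ω : Set Plane) : ℝ :=
  (μH[2] Ω).toReal

/-- The energy `E_{p,λ}(Ω) = ∫_Ω dist(x,∂Ω)^p dx + λ H¹(∂Ω)/H²(Ω)`. -/
noncomputable def energy (p lam : ℝ) (Ω : Set Plane) : ℝ :=
  distInt p Ω + lam * (perim Ω / area Ω)

/-- The admissible class `A`: compact, convex subsets of `ℝ²` of Hausdorff dimension 2. -/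
def Adm (Ω : Set Plane) : Prop :=
  IsCompact Ω ∧ Convex ℝ Ω ∧ dimH Ω = 2

-- frontier of a scaled set
lemma frontier_smul_set {t : ℝ} (ht : t ≠ 0) (s : Set Plane) :
    frontier (t • s) = t • frontier s := by
  rw [frontier, frontier, closure_smul₀' ht, interior_smul₀ ht, smul_set_sdiff₀ ht]

-- Hausdorff measure of a scaled set, toReal version
lemma hM_smul (d : ℝ) (hd : 0 ≤ d) {t : ℝ} (ht : 0 < t) (s : Set Plane) :
    ((μH[d] (t • s)).toReal) = t ^ d * (μH[d] s).toReal := by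
  rw [Measure.hausdorffMeasure_smul₀ hd ht.ne' s]
  rw [ENNReal.smul_def, smul_eq_mul, ENNReal.toReal_mul, ENNReal.coe_toReal,
    NNReal.coe_rpow, coe_nnnorm, Real.norm_eq_abs, abs_of_pos ht]

lemma map_smul_hausdorff (d : ℝ) (hd : 0 ≤ d) {t : ℝ} (ht : t ≠ 0) :
    Measure.map (fun x : Plane => t • x) μH[d] = (‖t⁻¹‖₊ ^ d : ℝ≥0) • μH[d] := by
  ext s hs
  rw [Measure.map_apply (continuous_const_smul t).measurable hs]
  have hpre : (fun x : Plane => t • x) ⁻¹' s = t⁻¹ • s := by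
    ext x
    rw [Set.mem_smul_set_iff_inv_smul_mem₀ (inv_ne_zero ht), inv_inv]
    rfl
  rw [hpre, Measure.hausdorffMeasure_smul₀ hd (inv_ne_zero ht), Measure.smul_apply]

lemma distInt_smul (p : ℝ) (hp : 0 ≤ p) {t : ℝ} (ht : 0 < t) (Ω : Set Plane) :
    distInt p (t • Ω) = t ^ (p + 2) * distInt p Ω := by
  have htne : t ≠ 0 := ht.ne'
  have key : ∫ x in Ω, infDist (t • x) (frontier (t • Ω)) ^ p ∂μH[2]
      = (‖t⁻¹‖₊ ^ (2:ℝ) : ℝ≥0) • ∫ y in t • Ω, infDist y (frontier (t • Ω)) ^ p ∂μH[2] := by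
    let e : Plane ≃ᵐ Plane := (Homeomorph.smul (Units.mk0 t htne)).toMeasurableEquiv
    have hmap : Measure.map e (μH[2] : Measure Plane) = (‖t⁻¹‖₊ ^ (2:ℝ) : ℝ≥0) • μH[2] := by
      rw [show ⇑e = fun x : Plane => t • x from rfl, map_smul_hausdorff 2 (by norm_num) htne]
    have hpre : e ⁻¹' (t • Ω) = Ω := by
      rw [show ⇑e = fun x : Plane => t • x from rfl]
      ext x
      simp [Set.smul_mem_smul_set_iff₀ htne]
    calc ∫ x in Ω, infDist (t • x) (frontier (t • Ω)) ^ p ∂μH[2]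
        = ∫ y in t • Ω, infDist y (frontier (t • Ω)) ^ p ∂(Measure.map e μH[2]) := by
          rw [setIntegral_map_equiv e _ (t • Ω), hpre]; rfl
      _ = (‖t⁻¹‖₊ ^ (2:ℝ) : ℝ≥0) • ∫ y in t • Ω, infDist y (frontier (t • Ω)) ^ p ∂μH[2] := by
          rw [hmap, ENNReal.smul_def, Measure.restrict_smul, integral_smul_measure,
            ENNReal.coe_toReal, NNReal.smul_def]
  have hsc : ∀ x : Plane, infDist (t • x) (frontier (t • Ω)) ^ p
      = t ^ p * infDist x (frontier Ω) ^ p := by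
    intro x
    rw [frontier_smul_set htne, infDist_smul₀ htne, Real.norm_eq_abs, abs_of_pos ht,
      Real.mul_rpow ht.le (infDist_nonneg)]
  have hcoef : ((‖t⁻¹‖₊ ^ (2:ℝ) : ℝ≥0) : ℝ) = (t ^ (2:ℝ))⁻¹ := by
    rw [NNReal.coe_rpow, coe_nnnorm, Real.norm_eq_abs, abs_of_pos (inv_pos.2 ht),
      ← Real.inv_rpow ht.le]
  have h1 : distInt p (t • Ω) = (t ^ (2:ℝ)) * ∫ x in Ω, infDist (t • x) (frontier (t • Ω)) ^ p ∂μH[2] := by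
    rw [distInt, key, NNReal.smul_def, smul_eq_mul, hcoef, ← mul_assoc,
      mul_inv_cancel₀ (by positivity : (t:ℝ) ^ (2:ℝ) ≠ 0), one_mul]
  rw [h1]
  simp_rw [hsc]
  rw [integral_const_mul, distInt, ← mul_assoc, ← Real.rpow_add ht, add_comm (2:ℝ) p]

lemma adm_smul {t : ℝ} (ht : 0 < t) {Ω : Set Plane} (h : Adm Ω) : Adm (t • Ω) := by
  obtain ⟨hc, hv, hd⟩ := h
  refine ⟨?_, hv.smul t, ?_⟩
  · rw [show t • Ω = (fun x : Plane => t • x) '' Ω from rfl]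
    exact hc.image (continuous_const_smul t)
  · refine le_antisymm ?_ ?_
    · calc dimH (t • Ω) ≤ dimH Ω := (lipschitzWith_smul t).dimH_image_le Ω
        _ = 2 := hd
    · have him : (fun x : Plane => t⁻¹ • x) '' (t • Ω) = Ω := by
        rw [Set.image_smul, smul_smul, inv_mul_cancel₀ ht.ne', one_smul]
      calc (2:ℝ≥0∞) = dimH Ω := hd.symm
        _ = dimH ((fun x : Plane => t⁻¹ • x) '' (t • Ω)) := by rw [him]
        _ ≤ dimH (t • Ω) := (lipschitzWith_smul t⁻¹).dimH_image_le (t • Ω)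

lemma energy_smul (p lam : ℝ) (hp : 0 ≤ p) {t : ℝ} (ht : 0 < t) (Ω : Set Plane) :
    energy p lam (t • Ω) = t ^ (p + 2) * distInt p Ω + lam * ((perim Ω / area Ω) * t⁻¹) := by
  rw [energy, distInt_smul p hp ht]
  congr 1
  congr 1
  rw [perim, area, frontier_smul_set ht.ne', hM_smul 1 (by norm_num) ht,
    hM_smul 2 (by norm_num) ht, Real.rpow_one, perim, area]
  have ht2 : t ^ (2:ℝ) = t * t := by
    rw [show (2:ℝ) = ((2:ℕ):ℝ) by norm_num, Real.rpow_natCast]; ring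
  set P := (μH[1] (frontier Ω)).toReal
  set A := (μH[2] Ω).toReal
  rw [ht2]
  calc t * P / (t * t * A) = P / (t * A) := by
        rw [mul_assoc]; exact mul_div_mul_left P (t * A) ht.ne'
    _ = P / A * t⁻¹ := by rw [mul_comm t A, ← div_div, div_eq_mul_inv]


/-- every minimizer `Ω` of `E_{p,λ}` in `A` satisfies the stationarity identity
`∫_Ω dist(x,∂Ω)^p dx = (λ/(p+2)) H¹(∂Ω)/H²(Ω)`. -/
theorem stmt_17 (p lam : ℝ) (hp : 1 ≤ p) (hlam : 0 < lam)
    (Ω : Set Plane) (hΩ : Adm Ω)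
    (hmin : ∀ Ω' : Set Plane, Adm Ω' → energy p lam Ω ≤ energy p lam Ω') :
    distInt p Ω = (lam / (p + 2)) * (perim Ω / area Ω) := by
  set D := distInt p Ω with hD
  set C := perim Ω / area Ω with hC
  set g : ℝ → ℝ := fun t => t ^ (p + 2) * D + lam * (C * t⁻¹) with hg
  have hp0 : (0:ℝ) ≤ p := le_trans zero_le_one hp
  have hg1 : g 1 = energy p lam Ω := by
    simp [hg, energy, Real.one_rpow, hD, hC]
  have hloc : IsLocalMin g 1 := by
    have hmem : Set.Ioi (0:ℝ) ∈ 𝓝 (1:ℝ) := isOpen_Ioi.mem_nhds (by norm_num)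
    filter_upwards [hmem] with t ht
    rw [hg1]
    calc energy p lam Ω ≤ energy p lam (t • Ω) := hmin _ (adm_smul ht hΩ)
      _ = g t := by rw [energy_smul p lam hp0 ht Ω]
  have hderiv : HasDerivAt g ((p + 2) * D - lam * C) 1 := by
    have h1 : HasDerivAt (fun t : ℝ => t ^ (p + 2) * D) ((p + 2) * D) 1 := by
      have := (Real.hasDerivAt_rpow_const (x := (1:ℝ)) (p := p + 2)
        (Or.inl one_ne_zero)).mul_const D
      simpa using this
    have h2 : HasDerivAt (fun t : ℝ => lam * (C * t⁻¹)) (-(lam * C)) 1 := by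
      have := (hasDerivAt_inv (x := (1:ℝ)) one_ne_zero).const_mul (lam * C)
      simpa [mul_assoc] using this
    have := h1.add h2
    rw [sub_eq_add_neg]; exact this
  have hzero := hloc.hasDerivAt_eq_zero hderiv
  have hp2 : (0:ℝ) < p + 2 := by linarith
  have hDC : D = lam * C / (p + 2) := by
    rw [eq_div_iff hp2.ne']; linarith
  show D = lam / (p + 2) * C
  rw [div_mul_eq_mul_div]; exact hDC
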